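/- arXiv:1911.03357 — 3 statements merged into one kernel-verified Lean document; each statement's English description precedes it below -/
import Mathlib

section
/- Every multiplicative seminorm |·| on ℂ bounded by the hybrid norm (i.e. |0| = 0, |1| = 1, |zw| = |z|·|w|, |z + w| ≤ |z| + |w|, and |z| ≤ ‖z‖_hyb for all z, w ∈ ℂ) is of the form |z| = |z|_∞^λ for z ≠ 0, for a unique λ ∈ [0,1], where |z|_∞ denotes the usual complex modulus and λ = 0 corresponds to the trivial absolute value (equal to 1 on all nonzero z). In other words, the Berkovich spectrum of the Banach ring ℂ^hyb is in bijection with the interval [0,1] via λ ↦ |·|_∞^λ. -/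
/-- The hybrid norm on `ℂ`: `‖z‖_hyb = max {1, |z|}` for `z ≠ 0`, and `‖0‖_hyb = 0`. -/
noncomputable def hybNorm (z : ℂ) : ℝ := if z = 0 then 0 else max 1 ‖z‖

/-- Every multiplicative seminorm on `ℂ` bounded by the hybrid norm is of the form
`|z| = |z|_∞ ^ λ` for `z ≠ 0`, for a unique `λ ∈ [0,1]` (with `λ = 0` corresponding to the
trivial absolute value).  In other words, the Berkovich spectrum `M(ℂ^hyb)` is in bijection
with `[0,1]` via `λ ↦ |·|_∞^λ`. -/
theorem berkovich_spectrum_hybrid_complex (φ : ℂ → ℝ) (hnonneg : ∀ z : ℂ, 0 ≤ φ z)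
    (h0 : φ 0 = 0) (h1 : φ 1 = 1)
    (hmul : ∀ z w : ℂ, φ (z * w) = φ z * φ w)
    (hadd : ∀ z w : ℂ, φ (z + w) ≤ φ z + φ w)
    (hbdd : ∀ z : ℂ, φ z ≤ hybNorm z) :
    ∃! l : ℝ, l ∈ Set.Icc (0 : ℝ) 1 ∧ ∀ z : ℂ, z ≠ 0 → φ z = ‖z‖ ^ l := by
  -- φ z > 0 for z ≠ 0, and φ z⁻¹ = (φ z)⁻¹
  have hinv : ∀ z : ℂ, z ≠ 0 → φ z * φ z⁻¹ = 1 := by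
    intro z hz
    rw [← hmul, mul_inv_cancel₀ hz, h1]
  have hpos : ∀ z : ℂ, z ≠ 0 → 0 < φ z := by
    intro z hz
    rcases (hnonneg z).lt_or_eq with h | h
    · exact h
    · exfalso; have := hinv z hz; rw [← h, zero_mul] at this; norm_num at this
  -- φ z ≤ 1 when |z| ≤ 1
  have hle1 : ∀ z : ℂ, ‖z‖ ≤ 1 → φ z ≤ 1 := by
    intro z hz
    rcases eq_or_ne z 0 with rfl | h
    · rw [h0]; norm_num
    · have := hbdd z
      rwa [hybNorm, if_neg h, max_eq_left hz] at this
  -- φ u = 1 when |u| = 1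
  have hunit : ∀ u : ℂ, ‖u‖ = 1 → φ u = 1 := by
    intro u hu
    have hu0 : u ≠ 0 := by
      intro h; rw [h] at hu; simp at hu
    have h1' : φ u ≤ 1 := hle1 u hu.le
    have h2' : φ u⁻¹ ≤ 1 := hle1 u⁻¹ (by rw [norm_inv, hu]; norm_num)
    have := hinv u hu0
    nlinarith [hpos u hu0]
  -- φ r ≥ 1 for real r ≥ 1
  have hge1 : ∀ r : ℝ, 1 ≤ r → 1 ≤ φ (r : ℂ) := by
    intro r hr
    have hr0 : (r : ℂ) ≠ 0 := by
      simp only [ne_eq, Complex.ofReal_eq_zero]; linarith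
    have h2' : φ (r : ℂ)⁻¹ ≤ 1 := by
      apply hle1
      rw [norm_inv, Complex.norm_real, Real.norm_eq_abs, abs_of_pos (by linarith)]
      exact inv_le_one_of_one_le₀ hr
    have := hinv _ hr0
    nlinarith [hpos _ hr0, hnonneg ((r:ℂ)⁻¹)]
  -- φ r ≤ r for real r ≥ 1
  have hler : ∀ r : ℝ, 1 ≤ r → φ (r : ℂ) ≤ r := by
    intro r hr
    have hr0 : (r : ℂ) ≠ 0 := by
      simp only [ne_eq, Complex.ofReal_eq_zero]; linarith
    have := hbdd (r : ℂ)
    rwa [hybNorm, if_neg hr0, Complex.norm_real, Real.norm_eq_abs, abs_of_pos (by linarith),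
      max_eq_right hr] at this
  -- the additive function g t = log φ(exp t)
  set g : ℝ → ℝ := fun t => Real.log (φ ((Real.exp t : ℝ) : ℂ)) with hg
  have hexp0 : ∀ t : ℝ, ((Real.exp t : ℝ) : ℂ) ≠ 0 := by
    intro t
    simp [Real.exp_ne_zero t]
  have hgadd : ∀ s t : ℝ, g (s + t) = g s + g t := by
    intro s t
    simp only [hg]
    rw [Real.exp_add, Complex.ofReal_mul, hmul,
      Real.log_mul (hpos _ (hexp0 s)).ne' (hpos _ (hexp0 t)).ne']
  -- bounds: for t ≥ 0, 0 ≤ g t ≤ t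
  have hgub : ∀ t : ℝ, 0 ≤ t → g t ≤ t := by
    intro t ht
    have h1' : (1:ℝ) ≤ Real.exp t := Real.one_le_exp ht
    have := hler _ h1'
    calc g t ≤ Real.log (Real.exp t) := Real.log_le_log (hpos _ (hexp0 t)) this
      _ = t := Real.log_exp t
  have hglb : ∀ t : ℝ, 0 ≤ t → 0 ≤ g t := by
    intro t ht
    have := hge1 _ (Real.one_le_exp ht)
    have := Real.log_le_log (by norm_num) this
    simpa [hg] using this
  -- bundle into AddMonoidHom
  have hg0 : g 0 = 0 := by
    have := hgadd 0 0
    simp at this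
    linarith
  let G : ℝ →+ ℝ := AddMonoidHom.mk' g (by intro a b; exact hgadd a b)
  have hGneg : ∀ t : ℝ, g (-t) = - g t := fun t => map_neg G t
  -- squeeze: |g t| ≤ |t|
  have habs : ∀ t : ℝ, |g t| ≤ |t| := by
    intro t
    rcases le_or_gt 0 t with ht | ht
    · rw [abs_of_nonneg (hglb t ht), abs_of_nonneg ht]; exact hgub t ht
    · have ht' : 0 ≤ -t := by linarith
      rw [abs_of_nonpos (by rw [← neg_neg t, hGneg]; linarith [hglb _ ht']),
        abs_of_neg ht, ← neg_neg t, hGneg]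
      simp only [neg_neg, neg_le_neg_iff]
      exact hgub _ ht'
  -- continuity of G
  have hGcont : Continuous G := by
    apply continuous_of_continuousAt_zero G
    rw [ContinuousAt, map_zero]
    have : Filter.Tendsto (fun t : ℝ => |t|) (nhds 0) (nhds 0) := by
      simpa using continuous_abs.tendsto (0:ℝ)
    exact squeeze_zero_norm (fun t => by simpa [Real.norm_eq_abs, G] using habs t) this
  -- linearity
  have hlin : ∀ t : ℝ, g t = t * g 1 := by
    intro t
    have := (G.toRealLinearMap hGcont).map_smul t 1
    simpa [mul_comm, G] using this
  set l := g 1 with hl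
  have hl0 : 0 ≤ l := hglb 1 (by norm_num)
  have hl1 : l ≤ 1 := hgub 1 (by norm_num)
  -- main formula
  have hformula : ∀ z : ℂ, z ≠ 0 → φ z = ‖z‖ ^ l := by
    intro z hz
    have habz : 0 < ‖z‖ := by
      exact norm_pos_iff.mpr hz
    -- write z = |z| * u with |u| = 1
    have hu : ‖z / (‖z‖ : ℂ)‖ = 1 := by
      rw [norm_div, Complex.norm_real, norm_norm, div_self habz.ne']
    have hzdecomp : z = ((‖z‖ : ℝ) : ℂ) * (z / (‖z‖ : ℂ)) := by
      rw [mul_comm]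
      exact (div_mul_cancel₀ z (by simpa [Complex.ofReal_eq_zero] using habz.ne')).symm
    have hφz : φ z = φ ((‖z‖ : ℝ) : ℂ) := by
      rw [hzdecomp, hmul, hunit _ hu, mul_one]
      rw [← hzdecomp]
    -- φ(|z|) = exp (g (log |z|)) = |z|^l
    have hgl : g (Real.log ‖z‖) = Real.log (φ ((‖z‖ : ℝ) : ℂ)) := by
      simp only [hg, Real.exp_log habz]
    have := hlin (Real.log ‖z‖)
    rw [hgl] at this
    have hφpos : 0 < φ ((‖z‖ : ℝ) : ℂ) :=
      hpos _ (by simpa [Complex.ofReal_eq_zero] using habz.ne')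
    rw [hφz, ← Real.exp_log hφpos, this, mul_comm, ← Real.log_rpow habz,
      Real.exp_log (Real.rpow_pos_of_pos habz l)]
  refine ⟨l, ⟨⟨hl0, hl1⟩, hformula⟩, ?_⟩
  rintro l' ⟨⟨hl'0, hl'1⟩, hform'⟩
  have h2 : (2:ℝ) ^ l' = (2:ℝ) ^ l := by
    have e1 := hform' (2 : ℂ) (by norm_num)
    have e2 := hformula (2 : ℂ) (by norm_num)
    rw [e1] at e2
    simpa using e2
  have := congrArg Real.log h2
  rw [Real.log_rpow (by norm_num), Real.log_rpow (by norm_num)] at this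
  have hlog2 : Real.log 2 ≠ 0 := ne_of_gt (Real.log_pos (by norm_num))
  exact mul_right_cancel₀ hlog2 this
end

section
/- A_r is a subring of ℂ((t)) and ‖·‖_r is a submultiplicative ring norm on it: if f, g ∈ A_r then f + g ∈ A_r and f·g ∈ A_r, with ‖f + g‖_r ≤ ‖f‖_r + ‖g‖_r and ‖f·g‖_r ≤ ‖f‖_r · ‖g‖_r; moreover ‖1‖_r = 1. -/
/-- `f ∈ A_r`:  a formal Laurent series `f = Σ aₙ tⁿ ∈ ℂ((t))` belongs to `A_r` when
`Σₙ ‖aₙ‖_hyb rⁿ < ∞`. -/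
def memAr (r : ℝ) (f : LaurentSeries ℂ) : Prop :=
  Summable (fun n : ℤ => hybNorm (f.coeff n) * r ^ n)

/-- The norm `‖f‖_r = Σₙ ‖aₙ‖_hyb rⁿ` on `A_r`. -/
noncomputable def normAr (r : ℝ) (f : LaurentSeries ℂ) : ℝ :=
  ∑' n : ℤ, hybNorm (f.coeff n) * r ^ n

lemma hyb_nonneg (z : ℂ) : 0 ≤ hybNorm z := by
  unfold hybNorm
  split
  · exact le_refl 0
  · exact le_trans zero_le_one (le_max_left _ _)

lemma hyb_one : hybNorm 1 = 1 := by
  simp [hybNorm]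

lemma hyb_add_le (a b : ℂ) : hybNorm (a + b) ≤ hybNorm a + hybNorm b := by
  by_cases ha : a = 0
  · simp [ha, hyb_nonneg]
  by_cases hb : b = 0
  · simp [hb, hyb_nonneg]
  by_cases hab : a + b = 0
  · simp only [hybNorm, if_pos hab, if_neg ha, if_neg hb]
    have h1 : (0:ℝ) ≤ max 1 (‖a‖) := le_trans zero_le_one (le_max_left _ _)
    have h2 : (0:ℝ) ≤ max 1 (‖b‖) := le_trans zero_le_one (le_max_left _ _)
    linarith
  · simp only [hybNorm, if_neg hab, if_neg ha, if_neg hb]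
    apply max_le
    · have : (1:ℝ) ≤ max 1 (‖a‖) := le_max_left _ _
      have h2 : (0:ℝ) ≤ max 1 (‖b‖) := le_trans zero_le_one (le_max_left _ _)
      linarith
    · calc ‖a + b‖ ≤ ‖a‖ + ‖b‖ := norm_add_le a b
        _ ≤ max 1 (‖a‖) + max 1 (‖b‖) :=
          add_le_add (le_max_right _ _) (le_max_right _ _)

lemma hyb_mul_le (a b : ℂ) : hybNorm (a * b) ≤ hybNorm a * hybNorm b := by
  by_cases ha : a = 0
  · simp [ha, hybNorm]
  by_cases hb : b = 0
  · simp [hb, hybNorm]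
  have hab : a * b ≠ 0 := mul_ne_zero ha hb
  simp only [hybNorm, if_neg hab, if_neg ha, if_neg hb]
  apply max_le
  · calc (1:ℝ) = 1 * 1 := (one_mul 1).symm
      _ ≤ max 1 (‖a‖) * max 1 (‖b‖) :=
        mul_le_mul (le_max_left _ _) (le_max_left _ _) zero_le_one
          (le_trans zero_le_one (le_max_left _ _))
  · rw [norm_mul]
    exact mul_le_mul (le_max_right _ _) (le_max_right _ _) (norm_nonneg b)
      (le_trans zero_le_one (le_max_left _ _))

lemma hyb_sum_le {α : Type*} (s : Finset α) (u : α → ℂ) :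
    hybNorm (∑ x ∈ s, u x) ≤ ∑ x ∈ s, hybNorm (u x) := by
  classical
  induction s using Finset.induction_on with
  | empty => simp [hybNorm]
  | @insert a s h ih =>
    rw [Finset.sum_insert h, Finset.sum_insert h]
    exact le_trans (hyb_add_le _ _) (by linarith)

def shearEquiv : ℤ × ℤ ≃ ℤ × ℤ where
  toFun := fun p => (p.1 - p.2, p.2)
  invFun := fun p => (p.1 + p.2, p.2)
  left_inv := fun p => by simp
  right_inv := fun p => by simp

/-- `A_r` is a subring of `ℂ((t))` and `‖·‖_r` is a submultiplicative ring norm on it: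
it contains `1` with `‖1‖_r = 1`, and it is closed under addition and multiplication, with
`‖f + g‖_r ≤ ‖f‖_r + ‖g‖_r` and `‖f·g‖_r ≤ ‖f‖_r·‖g‖_r`. -/
theorem Ar_subring_and_norm (r : ℝ) (hr0 : 0 < r) (hr1 : r < 1) :
    (memAr r 1 ∧ normAr r 1 = 1) ∧
    ∀ f g : LaurentSeries ℂ, memAr r f → memAr r g →
      memAr r (f + g) ∧ memAr r (f * g) ∧
      normAr r (f + g) ≤ normAr r f + normAr r g ∧
      normAr r (f * g) ≤ normAr r f * normAr r g := by
  have hrne : r ≠ 0 := ne_of_gt hr0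
  have hrpow : ∀ n : ℤ, (0:ℝ) < r ^ n := fun n => zpow_pos hr0 n
  -- the one part
  have hone : (fun n : ℤ => hybNorm ((1 : LaurentSeries ℂ).coeff n) * r ^ n)
      = fun n : ℤ => if n = 0 then (1:ℝ) else 0 := by
    funext n
    by_cases hn : n = 0
    · simp [hn, HahnSeries.coeff_one, hyb_one]
    · simp [HahnSeries.coeff_one, hn, hybNorm]
  have h1sum : HasSum (fun n : ℤ => hybNorm ((1 : LaurentSeries ℂ).coeff n) * r ^ n) 1 := by
    rw [hone]; exact hasSum_ite_eq 0 1
  refine ⟨⟨h1sum.summable, h1sum.tsum_eq⟩, ?_⟩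
  intro f g hf hg
  set F : ℤ → ℝ := fun n => hybNorm (f.coeff n) * r ^ n with hF
  set G : ℤ → ℝ := fun n => hybNorm (g.coeff n) * r ^ n with hG
  have hFnn : ∀ n, 0 ≤ F n := fun n => mul_nonneg (hyb_nonneg _) (hrpow n).le
  have hGnn : ∀ n, 0 ≤ G n := fun n => mul_nonneg (hyb_nonneg _) (hrpow n).le
  -- additive part
  have haddle : ∀ n : ℤ, hybNorm ((f + g).coeff n) * r ^ n ≤ F n + G n := by
    intro n
    have : hybNorm ((f + g).coeff n) ≤ hybNorm (f.coeff n) + hybNorm (g.coeff n) := by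
      rw [HahnSeries.coeff_add]; exact hyb_add_le _ _
    calc hybNorm ((f + g).coeff n) * r ^ n
        ≤ (hybNorm (f.coeff n) + hybNorm (g.coeff n)) * r ^ n :=
          mul_le_mul_of_nonneg_right this (hrpow n).le
      _ = F n + G n := by rw [add_mul]
  have haddsum : memAr r (f + g) :=
    Summable.of_nonneg_of_le (fun n => mul_nonneg (hyb_nonneg _) (hrpow n).le) haddle (hf.add hg)
  have haddnorm : normAr r (f + g) ≤ normAr r f + normAr r g := by
    calc normAr r (f + g) ≤ ∑' n : ℤ, (F n + G n) := Summable.tsum_le_tsum haddle haddsum (hf.add hg)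
      _ = normAr r f + normAr r g := Summable.tsum_add hf hg
  -- multiplicative part
  have Hprod : Summable fun p : ℤ × ℤ => F p.1 * G p.2 :=
    hf.mul_of_nonneg hg hFnn hGnn
  -- reindex by the shear equiv
  have Hprod' : Summable fun p : ℤ × ℤ => F (p.1 - p.2) * G p.2 := by
    have := (Equiv.summable_iff shearEquiv).2 Hprod
    simpa [shearEquiv, Function.comp_def] using this
  have hnn' : 0 ≤ fun p : ℤ × ℤ => F (p.1 - p.2) * G p.2 :=
    fun p => mul_nonneg (hFnn _) (hGnn _)
  obtain ⟨hfiber, hS⟩ := (summable_prod_of_nonneg hnn').1 Hprod'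
  set S : ℤ → ℝ := fun n => ∑' j : ℤ, F (n - j) * G j with hSdef
  -- key pointwise bound
  have hkey : ∀ n : ℤ, hybNorm ((f * g).coeff n) * r ^ n ≤ S n := by
    intro n
    classical
    set s := Finset.addAntidiagonal f.isPWO_support g.isPWO_support n with hs
    have hcoeff : (f * g).coeff n = ∑ ij ∈ s, f.coeff ij.1 * g.coeff ij.2 :=
      HahnSeries.coeff_mul
    have h1 : hybNorm ((f * g).coeff n) ≤ ∑ ij ∈ s, hybNorm (f.coeff ij.1) * hybNorm (g.coeff ij.2) := by
      rw [hcoeff]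
      refine le_trans (hyb_sum_le s _) (Finset.sum_le_sum fun ij _ => hyb_mul_le _ _)
    have h2 : hybNorm ((f * g).coeff n) * r ^ n
        ≤ ∑ ij ∈ s, F ij.1 * G ij.2 := by
      calc hybNorm ((f * g).coeff n) * r ^ n
          ≤ (∑ ij ∈ s, hybNorm (f.coeff ij.1) * hybNorm (g.coeff ij.2)) * r ^ n :=
            mul_le_mul_of_nonneg_right h1 (hrpow n).le
        _ = ∑ ij ∈ s, F ij.1 * G ij.2 := by
            rw [Finset.sum_mul]
            refine Finset.sum_congr rfl fun ij hij => ?_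
            obtain ⟨-, -, hsum⟩ := Finset.mem_addAntidiagonal.1 hij
            rw [← hsum, zpow_add₀ hrne]
            simp only [hF, hG]
            ring
    refine le_trans h2 ?_
    -- finite antidiagonal sum ≤ the full fiber tsum
    have himg : ∑ ij ∈ s, F ij.1 * G ij.2
        = ∑ j ∈ s.image Prod.snd, F (n - j) * G j := by
      rw [Finset.sum_image ?_]
      · refine Finset.sum_congr rfl fun ij hij => ?_
        obtain ⟨-, -, hsum⟩ := Finset.mem_addAntidiagonal.1 hij
        have : ij.1 = n - ij.2 := by omega
        rw [this]
      · intro x hx y hy hxy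
        obtain ⟨-, -, hx'⟩ := Finset.mem_addAntidiagonal.1 hx
        obtain ⟨-, -, hy'⟩ := Finset.mem_addAntidiagonal.1 hy
        have : x.1 = y.1 := by omega
        exact Prod.ext this hxy
    rw [himg]
    exact Summable.sum_le_tsum _ (fun j _ => mul_nonneg (hFnn _) (hGnn _)) (hfiber n)
  have hmulsum : memAr r (f * g) :=
    Summable.of_nonneg_of_le (fun n => mul_nonneg (hyb_nonneg _) (hrpow n).le) hkey hS
  refine ⟨haddsum, hmulsum, haddnorm, ?_⟩
  have htsumS : ∑' n : ℤ, S n = normAr r f * normAr r g := by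
    have h1 : normAr r f * normAr r g = ∑' p : ℤ × ℤ, F p.1 * G p.2 :=
      Summable.tsum_mul_tsum hf hg Hprod
    have h2 : ∑' p : ℤ × ℤ, F p.1 * G p.2 = ∑' p : ℤ × ℤ, F (p.1 - p.2) * G p.2 := by
      rw [← Equiv.tsum_eq shearEquiv (fun p : ℤ × ℤ => F p.1 * G p.2)]
      simp [shearEquiv]
    have h3 : ∑' p : ℤ × ℤ, F (p.1 - p.2) * G p.2 = ∑' n : ℤ, S n :=
      Summable.tsum_prod' Hprod' hfiber
    rw [h1, h2, h3]
  calc normAr r (f * g) ≤ ∑' n : ℤ, S n := Summable.tsum_le_tsum hkey hmulsum hS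
    _ = normAr r f * normAr r g := htsumS
end

section
/- The map z ↦ |·|_z from the closed disk {z ∈ ℂ : |z| ≤ r} to functions on A_r is injective: if z, z′ ∈ ℂ with |z| ≤ r, |z′| ≤ r and z ≠ z′, then there exists f ∈ A_r with |f|_z ≠ |f|_{z′}. -/
open scoped Classical

/-- The evaluation `ev_z(f) = f(z) = Σₙ aₙ zⁿ` of a formal Laurent series at `z ≠ 0`. -/
noncomputable def evalAr (z : ℂ) (f : LaurentSeries ℂ) : ℂ :=
  ∑' n : ℤ, f.coeff n * z ^ n

/-- The seminorm `|·|_z` on `A_r` for `z` in the closed disk of radius `r`: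
`|f|_z = |f(z)| ^ (log r / log |z|)` for `0 < |z| ≤ r`, and
`|f|₀ = r^(ord₀ f)` for `f ≠ 0 `, `|0|₀ = 0` at `z = 0`. -/
noncomputable def seminormAt (r : ℝ) (z : ℂ) (f : LaurentSeries ℂ) : ℝ :=
  if z = 0 then (if f = 0 then 0 else r ^ (HahnSeries.order f))
  else (‖evalAr z f‖) ^ (Real.log r / Real.log ‖z‖)

lemma coeff_lin (c : ℂ) (n : ℤ) :
    ((HahnSeries.single (1:ℤ) (1:ℂ)) - HahnSeries.single 0 c).coeff n
      = (if n = 1 then 1 else 0) - (if n = 0 then c else 0) := by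
  simp [HahnSeries.coeff_sub, HahnSeries.coeff_single]
  split_ifs <;> rfl

lemma key (r : ℝ) (hr0 : 0 < r) (hr1 : r < 1)
    (z c : ℂ) (hz : ‖z‖ ≤ r) (hc : ‖c‖ ≤ r) (hc0 : c ≠ 0)
    (hzc : z ≠ c) :
    memAr r ((HahnSeries.single (1:ℤ) (1:ℂ)) - HahnSeries.single 0 c) ∧
      seminormAt r z ((HahnSeries.single (1:ℤ) (1:ℂ)) - HahnSeries.single 0 c) ≠
      seminormAt r c ((HahnSeries.single (1:ℤ) (1:ℂ)) - HahnSeries.single 0 c) := by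
  set f : LaurentSeries ℂ := (HahnSeries.single (1:ℤ) (1:ℂ)) - HahnSeries.single 0 c with hf
  have hcoeff : ∀ n : ℤ, f.coeff n = (if n = 1 then 1 else 0) - (if n = 0 then c else 0) :=
    coeff_lin c
  have hc0' : ‖c‖ ≠ 0 := norm_ne_zero_iff.mpr hc0
  have hcpos : 0 < ‖c‖ := norm_pos_iff.mpr hc0
  -- exponent nonzero
  have hlogr : Real.log r ≠ 0 := Real.log_ne_zero_of_pos_of_ne_one hr0 (ne_of_lt hr1)
  have hlogc : Real.log ‖c‖ ≠ 0 := by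
    have : ‖c‖ < 1 := lt_of_le_of_lt hc hr1
    exact ne_of_lt (Real.log_neg hcpos this)
  -- membership
  have hmem : memAr r f := by
    apply summable_of_ne_finset_zero (s := ({0, 1} : Finset ℤ))
    intro n hn
    simp only [Finset.mem_insert, Finset.mem_singleton, not_or] at hn
    have : f.coeff n = 0 := by rw [hcoeff]; simp [hn.1, hn.2]
    simp [this, hybNorm]
  refine ⟨hmem, ?_⟩
  -- evaluation at any w: f(w) = w - c
  have heval : ∀ w : ℂ, evalAr w f = w - c := by
    intro w
    have : evalAr w f = ∑ n ∈ ({0, 1} : Finset ℤ), f.coeff n * w ^ n := by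
      apply tsum_eq_sum
      intro n hn
      simp only [Finset.mem_insert, Finset.mem_singleton, not_or] at hn
      have : f.coeff n = 0 := by rw [hcoeff]; simp [hn.1, hn.2]
      simp [this]
    rw [this]
    rw [Finset.sum_insert (by norm_num), Finset.sum_singleton]
    rw [hcoeff, hcoeff]
    norm_num
    ring
  -- seminorm at c is 0
  have hsc : seminormAt r c f = 0 := by
    rw [seminormAt, if_neg hc0, heval]
    simp [Real.zero_rpow (div_ne_zero hlogr hlogc)]
  rw [hsc]
  by_cases hz0 : z = 0
  · -- seminorm at 0 is r^order f = r^0 = 1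
    have hfne : f ≠ 0 := by
      intro h
      have := hcoeff 0
      rw [h] at this
      simp at this
      exact hc0 this
    have hord : f.order = 0 := by
      have h0 : f.coeff 0 ≠ 0 := by rw [hcoeff]; simpa using hc0
      have hle : f.order ≤ 0 := HahnSeries.order_le_of_coeff_ne_zero h0
      have hge : 0 ≤ f.order := by
        have := HahnSeries.coeff_order_eq_zero.not.mpr hfne
        rw [hcoeff] at this
        by_contra hlt
        push_neg at hlt
        have h1 : f.order ≠ 1 := by omega
        have h2 : f.order ≠ 0 := by omega
        simp [h1, h2] at this
      omega
    rw [seminormAt, if_pos hz0, if_neg hfne, hord]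
    norm_num
  · -- seminorm at z is positive
    rw [seminormAt, if_neg hz0, heval]
    have : 0 < ‖z - c‖ := by
      rw [norm_pos_iff]; exact sub_ne_zero_of_ne hzc
    exact ne_of_gt (Real.rpow_pos_of_pos this _)

/-- The map `z ↦ |·|_z` from the closed disk `{|z| ≤ r}` to functions on `A_r` is
injective: if `z ≠ z′` are two points of the closed disk then there is some `f ∈ A_r` with
`|f|_z ≠ |f|_{z′}`. -/
theorem seminormAt_injective (r : ℝ) (hr0 : 0 < r) (hr1 : r < 1)
    (z z' : ℂ) (hz : ‖z‖ ≤ r) (hz' : ‖z'‖ ≤ r) (hne : z ≠ z') :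
    ∃ f : LaurentSeries ℂ, memAr r f ∧ seminormAt r z f ≠ seminormAt r z' f := by
  by_cases h : z' = 0
  · subst h
    obtain ⟨hm, hs⟩ := key r hr0 hr1 0 z hz' hz hne hne.symm
    exact ⟨_, hm, hs.symm⟩
  · obtain ⟨hm, hs⟩ := key r hr0 hr1 z z' hz hz' h hne
    exact ⟨_, hm, hs⟩
end
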